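/- Division lemma: let h ∈ ℂ[[x,y]] be quasi-homogeneous of degree δ with isolated singularity, X₀ = δ^{-1}(h_y∂_x − h_x∂_y), and J₀ = (h_x, h_y) the Jacobian ideal. Then for every f ∈ J₀ there exist formal power series a and b such that f = a·h + X₀(b). -/

import Mathlib

set_option maxHeartbeats 1000000
set_option synthInstance.maxHeartbeats 1000000
noncomputable section

/-- The ring of formal power series in two variables over ℂ. -/
abbrev A2 := MvPowerSeries (Fin 2) ℂ

/-- Coefficient-wise partial derivative of a formal power series. -/
def pd (i : Fin 2) (f : A2) : A2 :=
  fun m => (((m i : ℕ) + 1 : ℕ) : ℂ) * MvPowerSeries.coeff (m + Finsupp.single i 1) f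

/-- The weighted radial derivation `R = p₁ x ∂_x + p₂ y ∂_y` on formal power series. -/
def Rder (p₁ p₂ : ℕ) (f : A2) : A2 :=
  (p₁ : ℂ) • (MvPowerSeries.X 0 * pd 0 f) + (p₂ : ℂ) • (MvPowerSeries.X 1 * pd 1 f)

/-- The normalized Hamiltonian derivation `X₀ = δ⁻¹ (h_y ∂_x − h_x ∂_y)` associated to `h`. -/
def ham (δ : ℕ) (h : A2) (f : A2) : A2 :=
  ((δ : ℂ))⁻¹ • (pd 1 h * pd 0 f - pd 0 h * pd 1 f)

/-- Substitution of a series `h` (with zero constant term) into a one-variable formal power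
series `g`, i.e. `g(h) = Σₖ gₖ hᵏ`: only finitely many `k` contribute to each coefficient. -/
def substPS (h : A2) (g : PowerSeries ℂ) : A2 :=
  fun m => ∑ k ∈ Finset.range ((m.sum fun _ e => e) + 1),
    PowerSeries.coeff k g * MvPowerSeries.coeff m (h ^ k)

/-! ### Auxiliary lemmas -/

lemma coeff_apply' (f : A2) (m : Fin 2 →₀ ℕ) : MvPowerSeries.coeff m f = f m := rfl

lemma coeff_X_mul' (i : Fin 2) (f : A2) (m : Fin 2 →₀ ℕ) :
    MvPowerSeries.coeff m (MvPowerSeries.X i * f) =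
      if Finsupp.single i 1 ≤ m then MvPowerSeries.coeff (m - Finsupp.single i 1) f else 0 := by
  rw [MvPowerSeries.X, MvPowerSeries.coeff_monomial_mul]
  simp

lemma pd_add (i : Fin 2) (f g : A2) : pd i (f + g) = pd i f + pd i g := by
  funext m
  show _ = pd i f m + pd i g m
  simp [pd, map_add, mul_add]

lemma pd_smul (i : Fin 2) (c : ℂ) (f : A2) : pd i (c • f) = c • pd i f := by
  funext m
  show _ = c * pd i f m
  simp [pd, MvPowerSeries.coeff_smul]
  ring

lemma pd_sub (i : Fin 2) (f g : A2) : pd i (f - g) = pd i f - pd i g := by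
  funext m
  show _ = pd i f m - pd i g m
  simp [pd, map_sub, mul_sub]

/-- `x_i ∂_i f` has coefficient `mᵢ · f_m`. -/
lemma coeff_X_mul_pd (i : Fin 2) (f : A2) (m : Fin 2 →₀ ℕ) :
    MvPowerSeries.coeff m (MvPowerSeries.X i * pd i f) = ((m i : ℕ) : ℂ) * f m := by
  rw [coeff_X_mul']
  by_cases hle : Finsupp.single i 1 ≤ m
  · rw [if_pos hle]
    have h1 : 1 ≤ m i := by
      have := hle i
      simpa using this
    have h2 : (m - Finsupp.single i 1 : Fin 2 →₀ ℕ) i = m i - 1 := by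
      simp [Finsupp.tsub_apply]
    have h3 : (m - Finsupp.single i 1 : Fin 2 →₀ ℕ) + Finsupp.single i 1 = m :=
      tsub_add_cancel_of_le hle
    rw [coeff_apply']
    show ((((m - Finsupp.single i 1 : Fin 2 →₀ ℕ) i : ℕ) + 1 : ℕ) : ℂ) *
      MvPowerSeries.coeff ((m - Finsupp.single i 1 : Fin 2 →₀ ℕ) + Finsupp.single i 1) f = _
    rw [h2, h3, Nat.sub_add_cancel h1, coeff_apply']
  · rw [if_neg hle]
    have h0 : m i = 0 := by
      by_contra hne
      exact hle (fun j => by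
        rcases eq_or_ne j i with rfl | hj
        · simpa [Finsupp.single_eq_same] using Nat.one_le_iff_ne_zero.mpr hne
        · simp [Finsupp.single_apply, (Ne.symm hj)])
    rw [h0]
    simp

/-- `∂_i (x_i f) = f + x_i ∂_i f`. -/
lemma pd_X_mul (i : Fin 2) (f : A2) :
    pd i (MvPowerSeries.X i * f) = f + MvPowerSeries.X i * pd i f := by
  apply MvPowerSeries.ext
  intro m
  rw [map_add, coeff_X_mul_pd]
  have t1 : MvPowerSeries.coeff m (pd i (MvPowerSeries.X i * f))
      = (((m i : ℕ) + 1 : ℕ) : ℂ) *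
        MvPowerSeries.coeff (m + Finsupp.single i 1) (MvPowerSeries.X i * f) := rfl
  rw [t1, coeff_X_mul']
  have hle : Finsupp.single i 1 ≤ m + Finsupp.single i 1 := le_add_self
  rw [if_pos hle, add_tsub_cancel_right, coeff_apply']
  push_cast
  ring

lemma coeff_Rder (p₁ p₂ : ℕ) (f : A2) (m : Fin 2 →₀ ℕ) :
    MvPowerSeries.coeff m (Rder p₁ p₂ f) = ((p₁ * m 0 + p₂ * m 1 : ℕ) : ℂ) * f m := by
  rw [Rder, map_add, MvPowerSeries.coeff_smul, MvPowerSeries.coeff_smul,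
    coeff_X_mul_pd, coeff_X_mul_pd]
  push_cast
  ring

/-- Solve `(R + (p₁+p₂)) a = g` coefficientwise. -/
def solveA (p₁ p₂ : ℕ) (g : A2) : A2 :=
  fun m => g m / (((p₁ * m 0 + p₂ * m 1 + p₁ + p₂ : ℕ) : ℂ))

lemma solveA_spec (p₁ p₂ : ℕ) (hp : 0 < p₁ + p₂) (g : A2) :
    Rder p₁ p₂ (solveA p₁ p₂ g) + ((p₁ + p₂ : ℕ) : ℂ) • solveA p₁ p₂ g = g := by
  apply MvPowerSeries.ext
  intro m
  have hD : ((p₁ * m 0 + p₂ * m 1 + p₁ + p₂ : ℕ) : ℂ) ≠ 0 :=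
    Nat.cast_ne_zero.mpr (by omega)
  rw [map_add, coeff_Rder, MvPowerSeries.coeff_smul, coeff_apply', coeff_apply']
  simp only [solveA]
  rw [← add_mul]
  have hDD : ((p₁ * m 0 + p₂ * m 1 : ℕ) : ℂ) + ((p₁ + p₂ : ℕ) : ℂ)
      = ((p₁ * m 0 + p₂ * m 1 + p₁ + p₂ : ℕ) : ℂ) := by push_cast; ring
  rw [hDD, mul_div_cancel₀ _ hD]

/-- Integrate a compatible pair: a series whose `∂₀` is `B1`. -/
def integ (B1 B2 : A2) : A2 := fun m =>
  if m 0 = 0 then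
    (if m 1 = 0 then 0 else B2 (m - Finsupp.single 1 1) / ((m 1 : ℕ) : ℂ))
  else B1 (m - Finsupp.single 0 1) / ((m 0 : ℕ) : ℂ)

lemma integ_pd0 (B1 B2 : A2) : pd 0 (integ B1 B2) = B1 := by
  funext m
  show (((m 0 : ℕ) + 1 : ℕ) : ℂ) * (integ B1 B2) (m + Finsupp.single 0 1) = B1 m
  have h0 : (m + Finsupp.single 0 1 : Fin 2 →₀ ℕ) 0 = m 0 + 1 := by
    simp
  have h1 : (m + Finsupp.single 0 1 : Fin 2 →₀ ℕ) - Finsupp.single 0 1 = m := by simp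
  rw [integ, if_neg (by omega), h1, h0]
  rw [mul_div_cancel₀ _ (Nat.cast_ne_zero.mpr (by omega))]

lemma integ_pd1 (B1 B2 : A2) (hc : pd 1 B1 = pd 0 B2) : pd 1 (integ B1 B2) = B2 := by
  funext m
  show (((m 1 : ℕ) + 1 : ℕ) : ℂ) * (integ B1 B2) (m + Finsupp.single 1 1) = B2 m
  have h0 : (m + Finsupp.single 1 1 : Fin 2 →₀ ℕ) 0 = m 0 := by
    simp [Finsupp.single_apply]
  have h1 : (m + Finsupp.single 1 1 : Fin 2 →₀ ℕ) 1 = m 1 + 1 := by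
    simp
  by_cases hm0 : m 0 = 0
  · rw [integ, if_pos (by rw [h0]; exact hm0), if_neg (by omega), h1]
    have h2 : (m + Finsupp.single 1 1 : Fin 2 →₀ ℕ) - Finsupp.single 1 1 = m := by simp
    rw [h2, mul_div_cancel₀ _ (Nat.cast_ne_zero.mpr (by omega))]
  · rw [integ, if_neg (by rw [h0]; exact hm0), h0]
    have hle : Finsupp.single 0 1 ≤ m := by
      intro j
      rcases eq_or_ne j 0 with rfl | hj
      · simpa using Nat.one_le_iff_ne_zero.mpr hm0
      · simp [Finsupp.single_apply, (Ne.symm hj)]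
    -- compatibility at m - single 0 1
    have hcm := congrFun hc (m - Finsupp.single 0 1)
    have e1 : (m - Finsupp.single 0 1 : Fin 2 →₀ ℕ) 1 = m 1 := by
      simp [Finsupp.tsub_apply, Finsupp.single_apply]
    have e0 : (m - Finsupp.single 0 1 : Fin 2 →₀ ℕ) 0 = m 0 - 1 := by
      simp [Finsupp.tsub_apply]
    have e2 : (m - Finsupp.single 0 1 : Fin 2 →₀ ℕ) + Finsupp.single 0 1 = m :=
      tsub_add_cancel_of_le hle
    have e3 : (m - Finsupp.single 0 1 : Fin 2 →₀ ℕ) + Finsupp.single 1 1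
        = (m + Finsupp.single 1 1 : Fin 2 →₀ ℕ) - Finsupp.single 0 1 :=
      tsub_add_eq_add_tsub hle
    have t1 : pd 1 B1 (m - Finsupp.single 0 1)
        = ((((m - Finsupp.single 0 1 : Fin 2 →₀ ℕ) 1) + 1 : ℕ) : ℂ) *
          B1 ((m - Finsupp.single 0 1 : Fin 2 →₀ ℕ) + Finsupp.single 1 1) := rfl
    have t2 : pd 0 B2 (m - Finsupp.single 0 1)
        = ((((m - Finsupp.single 0 1 : Fin 2 →₀ ℕ) 0) + 1 : ℕ) : ℂ) *
          B2 ((m - Finsupp.single 0 1 : Fin 2 →₀ ℕ) + Finsupp.single 0 1) := rfl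
    rw [t1, t2, e1, e0, e2, e3] at hcm
    have e4 : m 0 - 1 + 1 = m 0 := Nat.succ_pred_eq_of_pos (Nat.pos_of_ne_zero hm0)
    rw [e4] at hcm
    rw [mul_div_assoc', hcm]
    exact mul_div_cancel_left₀ _ (Nat.cast_ne_zero.mpr hm0)

/-- Division lemma: if `h` is quasi-homogeneous of degree `δ > 0` with isolated singularity,
then every element of the Jacobian ideal `J₀ = (h_x, h_y)` can be written `a·h + X₀(b)`. -/
theorem stmt12 (p₁ p₂ δ : ℕ) (hp₁ : 0 < p₁) (hp₂ : 0 < p₂) (hδ : 0 < δ) (h : A2)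
    (hqh : Rder p₁ p₂ h = (δ : ℂ) • h)
    (hiso : FiniteDimensional ℂ (A2 ⧸ Ideal.span {pd 0 h, pd 1 h})) :
    ∀ f ∈ Ideal.span {pd 0 h, pd 1 h}, ∃ a b : A2, f = a * h + ham δ h b := by
  intro f hf
  rw [Ideal.mem_span_pair] at hf
  obtain ⟨u, v, huv⟩ := hf
  set g : A2 := (δ : ℂ) • (pd 0 u + pd 1 v) with hg
  set a := solveA p₁ p₂ g with ha
  have hspec : Rder p₁ p₂ a + ((p₁ + p₂ : ℕ) : ℂ) • a = g := solveA_spec p₁ p₂ (by omega) g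
  set B1 : A2 := (δ : ℂ) • v - (p₂ : ℂ) • (MvPowerSeries.X 1 * a) with hB1
  set B2 : A2 := (p₁ : ℂ) • (MvPowerSeries.X 0 * a) - (δ : ℂ) • u with hB2
  have hcomp : pd 1 B1 = pd 0 B2 := by
    have key : pd 1 B1 - pd 0 B2 = g - (Rder p₁ p₂ a + ((p₁ + p₂ : ℕ) : ℂ) • a) := by
      rw [hB1, hB2, pd_sub, pd_sub, pd_smul, pd_smul, pd_smul, pd_smul,
        pd_X_mul, pd_X_mul, hg, Rder]
      push_cast
      module
    rw [hspec, sub_self, sub_eq_zero] at key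
    exact key
  refine ⟨a, integ B1 B2, ?_⟩
  simp only [ham]
  rw [integ_pd0, integ_pd1 _ _ hcomp]
  have hδ' : ((δ : ℕ) : ℂ) ≠ 0 := Nat.cast_ne_zero.mpr hδ.ne'
  have hδδ : (algebraMap ℂ A2) ((δ : ℕ) : ℂ)⁻¹ * (algebraMap ℂ A2) ((δ : ℕ) : ℂ) = 1 := by
    rw [← map_mul, inv_mul_cancel₀ hδ', map_one]
  rw [Rder] at hqh
  rw [hB1, hB2]
  simp only [Algebra.smul_def] at hqh ⊢
  linear_combination (a * h - f) * hδδ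
    - ((algebraMap ℂ A2) ((δ : ℕ) : ℂ)⁻¹ * (algebraMap ℂ A2) ((δ : ℕ) : ℂ)) * huv
    + ((algebraMap ℂ A2) ((δ : ℕ) : ℂ)⁻¹ * a) * hqh
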